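/- arXiv:2011.03784 — 4 statements merged into one kernel-verified Lean document; each statement's English description precedes it below -/
import Mathlib

section
/- A finitely generated residually finite group G is nilpotent of class n if and only if its profinite completion is nilpotent of class n. -/
/-- The index set of finite-index normal subgroups of `G`. -/
abbrev FinNormal (G : Type*) [Group G] := {N : Subgroup G // N.Normal ∧ N.FiniteIndex}

instance {G : Type*} [Group G] (N : FinNormal G) : N.1.Normal := N.2.1

/-- The subgroup of compatible families defining the profinite completion. -/
def profCarrier (G : Type*) [Group G] : Subgroup (∀ N : FinNormal G, G ⧸ N.1) where
  carrier := {x | ∀ (N M : FinNormal G) (h : N.1 ≤ M.1),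
    QuotientGroup.map N.1 M.1 (MonoidHom.id G) (fun g hg => h hg) (x N) = x M}
  one_mem' := by intro N M h; simp
  mul_mem' := by
    intro a b ha hb N M h
    show (QuotientGroup.map _ _ _ _) (a N * b N) = a M * b M
    rw [map_mul, ha N M h, hb N M h]
  inv_mem' := by
    intro a ha N M h
    show (QuotientGroup.map _ _ _ _) (a N)⁻¹ = (a M)⁻¹
    rw [map_inv, ha N M h]

/-- The profinite completion of `G`: the inverse limit of its finite quotients. -/
abbrev ProfiniteCompletion (G : Type*) [Group G] := ↥(profCarrier G)

/-- The canonical map `G → Ĝ`. -/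
def iota (G : Type*) [Group G] : G →* ProfiniteCompletion G where
  toFun g := ⟨fun N => QuotientGroup.mk g, fun N M h => rfl⟩
  map_one' := by ext N; rfl
  map_mul' := by intro a b; ext N; rfl

instance {G : Type*} [Group G] (N : FinNormal G) : TopologicalSpace (G ⧸ N.1) := ⊥
instance {G : Type*} [Group G] (N : FinNormal G) : DiscreteTopology (G ⧸ N.1) := ⟨rfl⟩
instance {G : Type*} [Group G] (N : FinNormal G) : IsTopologicalGroup (G ⧸ N.1) where
  continuous_mul := continuous_of_discreteTopology
  continuous_inv := continuous_of_discreteTopology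

/-- A group is nilpotent of class exactly . -/
def NilpotentOfClass (G : Type*) [Group G] (n : ℕ) : Prop :=
  (⊤ : Subgroup G).lowerCentralSeries n = ⊥ ∧ ∀ m < n, (⊤ : Subgroup G).lowerCentralSeries m ≠ ⊥

lemma lcs_map_surjective {G H : Type*} [Group G] [Group H] (f : G →* H)
    (hf : Function.Surjective f) (n : ℕ) :
    ((⊤ : Subgroup G).lowerCentralSeries n).map f = (⊤ : Subgroup H).lowerCentralSeries n := by
  induction n with
  | zero => exact Subgroup.map_top_of_surjective f hf
  | succ n ih =>
    show (⁅(⊤ : Subgroup G).lowerCentralSeries n, ⊤⁆ : Subgroup G).map f = ⁅(⊤ : Subgroup H).lowerCentralSeries n, ⊤⁆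
    rw [Subgroup.map_commutator, ih, Subgroup.map_top_of_surjective f hf]

lemma lcs_bot_iff (G : Type*) [Group G]
    (hRF : Function.Injective (iota G)) (n : ℕ) :
    (⊤ : Subgroup G).lowerCentralSeries n = ⊥ ↔ (⊤ : Subgroup (ProfiniteCompletion G)).lowerCentralSeries n = ⊥ := by
  constructor
  · intro h
    -- each finite quotient has trivial lcs at n
    have hq : ∀ N : FinNormal G, (⊤ : Subgroup (G ⧸ N.1)).lowerCentralSeries n = ⊥ := by
      intro N
      rw [← lcs_map_surjective (QuotientGroup.mk' N.1) QuotientGroup.mk_surjective n, h,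
        Subgroup.map_bot]
    -- lcs of the subgroup maps into lcs of the product, which is ⊥
    have hsub := Subgroup.lowerCentralSeries_map_subtype_le (profCarrier G) n
    have hpi := Subgroup.top_lowerCentralSeries_pi_le (Gs := fun N : FinNormal G => G ⧸ N.1) n
    have hbot : (⊤ : Subgroup (∀ N : FinNormal G, G ⧸ N.1)).lowerCentralSeries n = ⊥ := by
      refine le_bot_iff.mp (hpi.trans ?_)
      intro x hx
      ext N
      simpa [hq N] using hx N (Set.mem_univ N)
    have : ((⊤ : Subgroup (ProfiniteCompletion G)).lowerCentralSeries n).map (profCarrier G).subtype = ⊥ :=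
      le_bot_iff.mp (hbot ▸ hsub)
    rwa [Subgroup.map_eq_bot_iff_of_injective _ (Subgroup.subtype_injective _)] at this
  · intro h
    have := Subgroup.lowerCentralSeries.map (iota G) n
    rw [h] at this
    have hmap : ((⊤ : Subgroup G).lowerCentralSeries n).map (iota G) = ⊥ := le_bot_iff.mp this
    rwa [Subgroup.map_eq_bot_iff_of_injective _ hRF] at hmap

/-- A finitely generated residually finite group  is nilpotent of class  if and only if
its profinite completion is nilpotent of class . -/
theorem stmt_0 (G : Type*) [Group G] (hFG : Group.FG G)
    (hRF : Function.Injective (iota G)) (n : ℕ) :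
    NilpotentOfClass G n ↔ NilpotentOfClass (ProfiniteCompletion G) n := by
  unfold NilpotentOfClass
  constructor
  · rintro ⟨h1, h2⟩
    exact ⟨(lcs_bot_iff G hRF n).mp h1,
      fun m hm hc => h2 m hm ((lcs_bot_iff G hRF m).mpr hc)⟩
  · rintro ⟨h1, h2⟩
    exact ⟨(lcs_bot_iff G hRF n).mpr h1,
      fun m hm hc => h2 m hm ((lcs_bot_iff G hRF m).mp hc)⟩
end

section
/- A finitely generated residually finite solvable group G has derived (solvable) length n if and only if its profinite completion has derived length n. -/
/-- A group is solvable of derived length exactly . -/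
def SolvableOfLength (G : Type*) [Group G] (n : ℕ) : Prop :=
  derivedSeries G n = ⊥ ∧ ∀ m < n, derivedSeries G m ≠ ⊥


lemma derivedSeries_bot_iff {G : Type*} [Group G] (hRF : Function.Injective (iota G)) (m : ℕ) :
    derivedSeries G m = ⊥ ↔ derivedSeries (ProfiniteCompletion G) m = ⊥ := by
  constructor
  · intro h
    rw [eq_bot_iff]
    intro x hx
    simp only [Subgroup.mem_bot]
    have hval : ∀ N : FinNormal G, x.1 N = 1 := by
      intro N
      let evN : ProfiniteCompletion G →* G ⧸ N.1 :=
        (Pi.evalMonoidHom (fun N : FinNormal G => G ⧸ N.1) N).comp (profCarrier G).subtype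
      have h1 : evN x ∈ derivedSeries (G ⧸ N.1) m :=
        map_derivedSeries_le_derivedSeries evN m (Subgroup.mem_map_of_mem _ hx)
      have h2 : derivedSeries (G ⧸ N.1) m = ⊥ := by
        rw [← map_derivedSeries_eq (QuotientGroup.mk'_surjective N.1) m, h, Subgroup.map_bot]
      rw [h2, Subgroup.mem_bot] at h1
      exact h1
    ext N
    exact hval N
  · intro h
    rw [eq_bot_iff]
    intro g hg
    have hmem : iota G g ∈ derivedSeries (ProfiniteCompletion G) m :=
      map_derivedSeries_le_derivedSeries (iota G) m (Subgroup.mem_map_of_mem _ hg)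
    rw [h, Subgroup.mem_bot] at hmem
    have := hRF (hmem.trans (map_one (iota G)).symm)
    simp [this]

/-- A finitely generated residually finite solvable group  has derived length  if and
only if its profinite completion has derived length . -/
theorem stmt_1 (G : Type*) [Group G] (hFG : Group.FG G)
    (hRF : Function.Injective (iota G)) (n : ℕ) :
    SolvableOfLength G n ↔ SolvableOfLength (ProfiniteCompletion G) n := by
  unfold SolvableOfLength
  constructor
  · rintro ⟨h1, h2⟩
    refine ⟨(derivedSeries_bot_iff hRF n).mp h1, fun m hm hb => h2 m hm ((derivedSeries_bot_iff hRF m).mpr hb)⟩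
  · rintro ⟨h1, h2⟩
    refine ⟨(derivedSeries_bot_iff hRF n).mpr h1, fun m hm hb => h2 m hm ((derivedSeries_bot_iff hRF m).mp hb)⟩
end

section
/- Let G be a finitely generated residually finite group and let H \le G be a subgroup of finite index. If the index of the centralizer C_G(H) in G is finite, then the centralizer of the closure of H in the profinite completion \widehat{G} has finite index in \widehat{G}. -/
/-- Projection from the profinite completion to a finite quotient. -/
def proj {G : Type*} [Group G] (N : FinNormal G) :
    ProfiniteCompletion G →* G ⧸ N.1 :=
  (Pi.evalMonoidHom (fun N : FinNormal G => G ⧸ N.1) N).comp (profCarrier G).subtype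

/-- Each coordinate of an element of the closure of the image of a subgroup lies in the
image of that subgroup in the corresponding finite quotient. -/
lemma coord_mem_of_mem_closure {G : Type*} [Group G] (H : Subgroup G) (K : FinNormal G)
    (y : ProfiniteCompletion G) (hy : y ∈ closure ((iota G) '' (H : Set G))) :
    ∃ h ∈ H, (QuotientGroup.mk h : G ⧸ K.1) = y.1 K := by
  have hcont : Continuous (fun z : ProfiniteCompletion G => z.1 K) :=
    (continuous_apply K).comp continuous_subtype_val
  have hclosed : IsClosed ((fun z : ProfiniteCompletion G => z.1 K) ⁻¹'
      ((fun z : ProfiniteCompletion G => z.1 K) '' ((iota G) '' (H : Set G)))) :=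
    (isClosed_discrete _).preimage hcont
  have hsub : (iota G) '' (H : Set G) ⊆ (fun z : ProfiniteCompletion G => z.1 K) ⁻¹'
      ((fun z : ProfiniteCompletion G => z.1 K) '' ((iota G) '' (H : Set G))) :=
    Set.subset_preimage_image _ _
  have := closure_minimal hsub hclosed hy
  obtain ⟨z, ⟨h, hh, rfl⟩, hzy⟩ := this
  exact ⟨h, hh, hzy⟩

/-- If  is a finitely generated residually finite group,  a finite-index subgroup
with centralizer of finite index in , then the centralizer of the closure of  in the
profinite completion of  has finite index. -/
theorem stmt_2 (G : Type*) [Group G] (hFG : Group.FG G)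
    (hRF : Function.Injective (iota G)) (H : Subgroup G) (hH : H.FiniteIndex)
    (hC : (Subgroup.centralizer (H : Set G)).FiniteIndex) :
    (Subgroup.centralizer (closure ((iota G) '' (H : Set G)))).FiniteIndex := by
  classical
  haveI := hC
  -- N₀ : the normal core of the centralizer, a finite-index normal subgroup
  obtain ⟨N₀, hN₀⟩ : ∃ N : FinNormal G,
      N.1 = (Subgroup.centralizer (H : Set G)).normalCore :=
    ⟨⟨_, Subgroup.normalCore_normal _, Subgroup.finiteIndex_normalCore _⟩, rfl⟩
  haveI : N₀.1.FiniteIndex := N₀.2.2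
  haveI : Finite (G ⧸ N₀.1) := inferInstance
  haveI : Finite (proj N₀).range := Subtype.finite
  haveI hker : (proj N₀).ker.FiniteIndex := Subgroup.finiteIndex_ker _
  refine Subgroup.finiteIndex_of_le (H := (proj N₀).ker) ?_
  intro x hx
  rw [Subgroup.mem_centralizer_iff]
  intro y hy
  ext M
  show y.1 M * x.1 M = x.1 M * y.1 M
  -- pass to the common refinement K with K.1 = N₀.1 ⊓ M.1
  haveI : M.1.FiniteIndex := M.2.2
  haveI : M.1.Normal := M.2.1
  haveI : N₀.1.Normal := N₀.2.1
  obtain ⟨K, hK⟩ : ∃ K : FinNormal G, K.1 = N₀.1 ⊓ M.1 :=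
    ⟨⟨N₀.1 ⊓ M.1, Subgroup.normal_inf_normal _ _, inferInstance⟩, rfl⟩
  have hKN : K.1 ≤ N₀.1 := hK ▸ inf_le_left
  have hKM : K.1 ≤ M.1 := hK ▸ inf_le_right
  -- the K-coordinate of x comes from an element of N₀
  obtain ⟨g, hg⟩ := QuotientGroup.mk_surjective (x.1 K)
  have hgN : g ∈ N₀.1 := by
    have hx0 : x.1 N₀ = 1 := hx
    have hcomp := x.2 K N₀ hKN
    rw [← hg, hx0] at hcomp
    have : (QuotientGroup.mk g : G ⧸ N₀.1) = 1 := hcomp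
    exact (QuotientGroup.eq_one_iff g).mp this
  -- the K-coordinate of y comes from an element of H
  obtain ⟨h, hh, hzy⟩ := coord_mem_of_mem_closure H K y hy
  -- g and h commute in G
  have hcomm : g * h = h * g := by
    have hgC : g ∈ Subgroup.centralizer (H : Set G) :=
      Subgroup.normalCore_le _ (hN₀ ▸ hgN)
    exact (Subgroup.mem_centralizer_iff.mp hgC h hh).symm
  -- hence the K-coordinates commute
  have hKcomm : x.1 K * y.1 K = y.1 K * x.1 K := by
    rw [← hg, ← hzy]
    rw [← QuotientGroup.mk_mul, ← QuotientGroup.mk_mul, hcomm]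
  -- push to the M-coordinate
  have hxM := x.2 K M hKM
  have hyM := y.2 K M hKM
  rw [← hxM, ← hyM, ← map_mul, ← map_mul, hKcomm]
end

section
/- Let \Sigma be a closed orientable surface of genus at least 2 and consider a central extension 1 \to Z^2 \to E \to \pi_1(\Sigma) \to 1. If the extension does not split, then there exists a finite quotient G of Z^2 such that the pushout extension 1 \to G \to E/\ker \to \pi_1(\Sigma) \to 1 does not split. -/
open scoped commutatorElement in
/-- The surface relator `[a₁,b₁]⋯[a_g,b_g]` in the free group on `2g` generators. -/
def surfaceRel (g : ℕ) : FreeGroup (Fin (2 * g)) :=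
  (List.ofFn fun i : Fin g =>
    ⁅FreeGroup.of ((⟨2 * i, by have := i.isLt; omega⟩ : Fin (2 * g))),
      FreeGroup.of ((⟨2 * i + 1, by have := i.isLt; omega⟩ : Fin (2 * g)))⁆).prod

/-- The fundamental group of the closed orientable surface of genus `g`. -/
abbrev SurfaceGroup (g : ℕ) :=
  PresentedGroup ({surfaceRel g} : Set (FreeGroup (Fin (2 * g))))

open scoped commutatorElement in
private lemma comm_central_left {E : Type*} [Group E] {a b c : E}
    (hc : c ∈ Subgroup.center E) : ⁅a * c, b⁆ = ⁅a, b⁆ := by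
  have h := Subgroup.mem_center_iff.mp hc
  have hcb : c * b * c⁻¹ = b := by rw [← h b, mul_inv_cancel_right]
  simp only [commutatorElement_def, mul_inv_rev]
  calc a * c * b * (c⁻¹ * a⁻¹) * b⁻¹ = a * (c * b * c⁻¹) * a⁻¹ * b⁻¹ := by group
    _ = a * b * a⁻¹ * b⁻¹ := by rw [hcb]

open scoped commutatorElement in
private lemma comm_central {E : Type*} [Group E] {a b a' b' c d : E}
    (hc : c ∈ Subgroup.center E) (hd : d ∈ Subgroup.center E)
    (ha : a' = a * c) (hb : b' = b * d) : ⁅a', b'⁆ = ⁅a, b⁆ := by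
  subst ha hb
  rw [comm_central_left hc, ← commutatorElement_inv, comm_central_left hd,
    commutatorElement_inv]

open scoped commutatorElement in
private lemma lift_surfaceRel {g : ℕ} {E : Type*} [Group E] (f : Fin (2 * g) → E) :
    FreeGroup.lift f (surfaceRel g) =
      (List.ofFn fun i : Fin g =>
        ⁅f ⟨2 * i, by have := i.isLt; omega⟩, f ⟨2 * i + 1, by have := i.isLt; omega⟩⁆).prod := by
  rw [surfaceRel, map_list_prod, List.map_ofFn]
  refine congrArg List.prod (congrArg List.ofFn (funext fun i => ?_))
  simp [Function.comp, map_commutatorElement]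

/-- If a central extension `1 → ℤ² → E → π₁(Σ_g) → 1` (`g ≥ 2`) does not split, then there is
a finite quotient of `ℤ²` (i.e. a finite-index subgroup `N ≤ i(ℤ²)` normal in `E`) for which
the pushout extension `1 → ℤ²/N → E/N → π₁(Σ_g) → 1` does not split.  (Splitting of the
pushout is expressed by the existence of a subgroup `T` with `N ≤ T`, `p(T) = ⊤` and
`T ⊓ ker p ≤ N`.) -/
theorem stmt_14 (g : ℕ) (hg : 2 ≤ g) (E : Type*) [Group E]
    (i : Multiplicative (ℤ × ℤ) →* E) (p : E →* SurfaceGroup g)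
    (hi : Function.Injective i) (hp : Function.Surjective p)
    (hexact : i.range = p.ker) (hcentral : i.range ≤ Subgroup.center E)
    (hnonsplit : ¬ ∃ s : SurfaceGroup g →* E, p.comp s = MonoidHom.id (SurfaceGroup g)) :
    ∃ N : Subgroup E, N.Normal ∧ N ≤ i.range ∧ (N.subgroupOf i.range).FiniteIndex ∧
      ¬ ∃ T : Subgroup E, N ≤ T ∧ Subgroup.map p T = ⊤ ∧ T ⊓ p.ker ≤ N := by
  classical
  have hkc : p.ker ≤ Subgroup.center E := hexact ▸ hcentral
  -- choose lifts of the generators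
  choose x hx using fun j : Fin (2 * g) => hp (PresentedGroup.of j)
  set c : E := FreeGroup.lift x (surfaceRel g) with hcdef
  -- relator value is independent of the choice of lifts
  have indep : ∀ t : Fin (2 * g) → E, (∀ j, p (t j) = PresentedGroup.of j) →
      FreeGroup.lift t (surfaceRel g) = c := by
    intro t ht
    rw [hcdef, lift_surfaceRel, lift_surfaceRel]
    refine congrArg List.prod (congrArg List.ofFn (funext fun k => ?_))
    set j1 : Fin (2 * g) := ⟨2 * k, by have := k.isLt; omega⟩
    set j2 : Fin (2 * g) := ⟨2 * k + 1, by have := k.isLt; omega⟩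
    refine comm_central (c := (x j1)⁻¹ * t j1) (d := (x j2)⁻¹ * t j2) ?_ ?_ ?_ ?_
    · exact hkc (by rw [p.mem_ker, map_mul, map_inv, ht, hx, inv_mul_cancel])
    · exact hkc (by rw [p.mem_ker, map_mul, map_inv, ht, hx, inv_mul_cancel])
    · rw [mul_inv_cancel_left]
    · rw [mul_inv_cancel_left]
  -- c lies in the kernel of p
  have hcker : c ∈ p.ker := by
    have h1 : p.comp (FreeGroup.lift x) =
        FreeGroup.lift (fun j : Fin (2 * g) => (PresentedGroup.of j : SurfaceGroup g)) := by
      apply FreeGroup.ext_hom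
      intro a
      simp [hx]
    have h2 : FreeGroup.lift (fun j : Fin (2 * g) => (PresentedGroup.of j : SurfaceGroup g)) =
        QuotientGroup.mk' (Subgroup.normalClosure ({surfaceRel g} : Set (FreeGroup (Fin (2 * g))))) := by
      apply FreeGroup.ext_hom
      intro a
      rfl
    rw [p.mem_ker]
    have : p c = (p.comp (FreeGroup.lift x)) (surfaceRel g) := rfl
    rw [this, h1, h2]
    exact (QuotientGroup.eq_one_iff _).mpr (Subgroup.subset_normalClosure rfl)
  -- c is nontrivial, else the extension splits
  have hcne : c ≠ 1 := by
    intro hc1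
    apply hnonsplit
    have hrels : ∀ r ∈ ({surfaceRel g} : Set (FreeGroup (Fin (2 * g)))),
        FreeGroup.lift x r = 1 := by
      rintro r rfl
      exact hc1
    refine ⟨PresentedGroup.toGroup hrels, ?_⟩
    apply PresentedGroup.ext
    intro j
    simp [PresentedGroup.toGroup.of, hx]
  obtain ⟨m, hm⟩ : c ∈ i.range := hexact ▸ hcker
  have hm1 : m ≠ 1 := by rintro rfl; exact hcne (by rw [← hm, map_one])
  set a : ℤ := (Multiplicative.toAdd m).1 with hadef
  set b : ℤ := (Multiplicative.toAdd m).2 with hbdef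
  set n : ℕ := a.natAbs + b.natAbs + 1 with hndef
  have hna : (n : ℤ) ∣ a → a = 0 := fun h =>
    Int.eq_zero_of_abs_lt_dvd h (by
      rw [Int.abs_eq_natAbs, hndef]
      exact_mod_cast (by omega : a.natAbs < a.natAbs + b.natAbs + 1))
  have hnb : (n : ℤ) ∣ b → b = 0 := fun h =>
    Int.eq_zero_of_abs_lt_dvd h (by
      rw [Int.abs_eq_natAbs, hndef]
      exact_mod_cast (by omega : b.natAbs < a.natAbs + b.natAbs + 1))
  have hnpos : 0 < n := by omega
  haveI : NeZero n := ⟨by omega⟩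
  set H : Subgroup (Multiplicative (ℤ × ℤ)) :=
    (powMonoidHom n : Multiplicative (ℤ × ℤ) →* Multiplicative (ℤ × ℤ)).range with hHdef
  -- membership in H is divisibility of both coordinates by n
  have hHmem : ∀ z : Multiplicative (ℤ × ℤ), z ∈ H ↔
      (n : ℤ) ∣ (Multiplicative.toAdd z).1 ∧ (n : ℤ) ∣ (Multiplicative.toAdd z).2 := by
    intro z
    constructor
    · rintro ⟨y, rfl⟩
      constructor
      · exact ⟨(Multiplicative.toAdd y).1, by simp [powMonoidHom_apply, toAdd_pow]⟩
      · exact ⟨(Multiplicative.toAdd y).2, by simp [powMonoidHom_apply, toAdd_pow]⟩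
    · rintro ⟨⟨k₁, hk₁⟩, ⟨k₂, hk₂⟩⟩
      refine ⟨Multiplicative.ofAdd (k₁, k₂), ?_⟩
      apply Multiplicative.toAdd.injective
      rw [powMonoidHom_apply, toAdd_pow]
      ext <;> simp [hk₁, hk₂, nsmul_eq_mul]
  set N : Subgroup E := H.map i with hNdef
  have hNle : N ≤ i.range := by
    rintro y ⟨h, _, rfl⟩
    exact ⟨h, rfl⟩
  refine ⟨N, ?_, hNle, ?_, ?_⟩
  · -- normality
    constructor
    intro y hy gE
    have hyc := Subgroup.mem_center_iff.mp (hcentral (hNle hy)) gE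
    have : gE * y * gE⁻¹ = y := by rw [hyc, mul_inv_cancel_right]
    rwa [this]
  · -- finite index
    let red : Multiplicative (ℤ × ℤ) →* Multiplicative (ZMod n × ZMod n) :=
      AddMonoidHom.toMultiplicative ((Int.castAddHom (ZMod n)).prodMap (Int.castAddHom (ZMod n)))
    have hred : ∀ z : Multiplicative (ℤ × ℤ), red z = 1 ↔ z ∈ H := by
      intro z
      rw [hHmem z]
      constructor
      · intro h
        have h1 : ((Multiplicative.toAdd z).1 : ZMod n) = 0 ∧
            ((Multiplicative.toAdd z).2 : ZMod n) = 0 := by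
          constructor
          · exact congrArg Prod.fst (congrArg Multiplicative.toAdd h)
          · exact congrArg Prod.snd (congrArg Multiplicative.toAdd h)
        exact ⟨(ZMod.intCast_zmod_eq_zero_iff_dvd _ n).mp h1.1,
          (ZMod.intCast_zmod_eq_zero_iff_dvd _ n).mp h1.2⟩
      · rintro ⟨h1, h2⟩
        have e1 := (ZMod.intCast_zmod_eq_zero_iff_dvd _ n).mpr h1
        have e2 := (ZMod.intCast_zmod_eq_zero_iff_dvd _ n).mpr h2
        apply Multiplicative.toAdd.injective
        ext
        · exact e1
        · exact e2
    let e := MonoidHom.ofInjective hi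
    let f : i.range →* Multiplicative (ZMod n × ZMod n) := red.comp (e.symm : i.range →* _)
    have hker : N.subgroupOf i.range = f.ker := by
      ext ⟨y, hy⟩
      rw [Subgroup.mem_subgroupOf, MonoidHom.mem_ker]
      have hiy : i (e.symm ⟨y, hy⟩) = y := MonoidHom.apply_ofInjective_symm hi ⟨y, hy⟩
      constructor
      · rintro ⟨h, hh, hhy⟩
        have : h = e.symm ⟨y, hy⟩ := hi (by rw [hhy, hiy])
        have : e.symm ⟨y, hy⟩ ∈ H := this ▸ hh
        exact (hred _).mpr this
      · intro hf
        exact ⟨e.symm ⟨y, hy⟩, (hred _).mp hf, hiy⟩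
    rw [hker]
    infer_instance
  · -- nonsplitting
    rintro ⟨T, hNT, hTtop, hTinf⟩
    have hlift : ∀ j : Fin (2 * g), ∃ t ∈ T, p t = PresentedGroup.of j := by
      intro j
      have : (PresentedGroup.of j : SurfaceGroup g) ∈ Subgroup.map p T := by
        rw [hTtop]; trivial
      obtain ⟨t, ht, hpt⟩ := this
      exact ⟨t, ht, hpt⟩
    choose t htT hpt using hlift
    have hct : FreeGroup.lift t (surfaceRel g) = c := indep t hpt
    have hcT : c ∈ T := by
      rw [← hct, lift_surfaceRel]
      apply Subgroup.list_prod_mem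
      intro y hy
      obtain ⟨k, hk⟩ := List.mem_ofFn.mp hy
      rw [← hk]
      exact mul_mem (mul_mem (mul_mem (htT _) (htT _)) (inv_mem (htT _))) (inv_mem (htT _))
    have hcN : c ∈ N := hTinf ⟨hcT, hcker⟩
    obtain ⟨h, hh, hhy⟩ := hcN
    have hhm : h = m := hi (by rw [hhy, hm])
    have := (hHmem m).mp (hhm ▸ hh)
    have ha0 : a = 0 := hna this.1
    have hb0 : b = 0 := hnb this.2
    apply hm1
    apply Multiplicative.toAdd.injective
    ext
    · exact ha0
    · exact hb0
end
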